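/- Let E be an invertible symmetric m×m real matrix, partitioned with E_{11} scalar (the (1,1) entry) and E_{22} the lower-right (m-1)×(m-1) block, and let E^{11}, E^{12}, E^{22} denote the corresponding blocks of E^{-1}. Let P_2 be the orthogonal projection onto the last m-1 coordinates. Then e_1ᵀ E^{-1} P_2 E^{-1} e_1 / E^{11} = tr(E^{22} - E_{22}^{-1}), provided E^{11} ≠ 0 and E_{22} is invertible. -/

import Mathlib

open Matrix Finset

/-- for an invertible symmetric E (with E₂₂ invertible and E¹¹ ≠ 0),
e₁ᵀ E⁻¹ P₂ E⁻¹ e₁ / E¹¹ = tr(E²² - E₂₂⁻¹), where P₂ projects on the last m-1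
coordinates and E²² denotes the lower-right block of E⁻¹. -/
theorem trace_block_identity (m : ℕ) (hm : 0 < m)
    (E : Matrix (Fin (m + 1)) (Fin (m + 1)) ℝ)
    (hE : E.IsSymm) (hEinv : IsUnit E.det)
    (E22 : Matrix (Fin m) (Fin m) ℝ) (hE22 : E22 = E.submatrix Fin.succ Fin.succ)
    (hE22inv : IsUnit E22.det)
    (h11 : E⁻¹ 0 0 ≠ 0)
    (e1 : Fin (m + 1) → ℝ) (he1 : e1 = fun j => if j = 0 then 1 else 0)
    (P2 : Matrix (Fin (m + 1)) (Fin (m + 1)) ℝ) (hP2 : P2 = 1 - vecMulVec e1 e1) :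
    (e1 ⬝ᵥ ((E⁻¹ * P2 * E⁻¹) *ᵥ e1)) / (E⁻¹ 0 0) =
      ((E⁻¹).submatrix Fin.succ Fin.succ - E22⁻¹).trace := by
  subst hE22
  have hEF : E * E⁻¹ = 1 := mul_nonsing_inv E hEinv
  have hsym : ∀ i j, E⁻¹ i j = E⁻¹ j i := by
    intro i j
    have h : (E⁻¹)ᵀ = E⁻¹ := by rw [transpose_nonsing_inv, hE]
    conv_lhs => rw [← h]
    rfl
  set F := E⁻¹ with hFdef
  set a := F 0 0 with ha
  set v : Fin m → ℝ := fun k => F k.succ 0 with hv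
  -- equations from E * F = 1
  have lemA : ∀ i : Fin m, E i.succ 0 * a + ∑ k : Fin m, E i.succ k.succ * v k = 0 := by
    intro i
    have h := congrFun (congrFun hEF i.succ) 0
    rw [Matrix.mul_apply, Fin.sum_univ_succ] at h
    simpa [Matrix.one_apply, Fin.succ_ne_zero i] using h
  have lemB : ∀ i j : Fin m,
      E i.succ 0 * F 0 j.succ + ∑ k : Fin m, E i.succ k.succ * F k.succ j.succ
        = if i = j then 1 else 0 := by
    intro i j
    have h := congrFun (congrFun hEF i.succ) j.succ
    rw [Matrix.mul_apply, Fin.sum_univ_succ] at h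
    simpa [Matrix.one_apply, Fin.succ_inj] using h
  set X : Matrix (Fin m) (Fin m) ℝ :=
    F.submatrix Fin.succ Fin.succ - a⁻¹ • vecMulVec v v with hX
  have hright : E.submatrix Fin.succ Fin.succ * X = 1 := by
    ext i j
    rw [Matrix.mul_apply]
    simp only [hX, Matrix.sub_apply, Matrix.submatrix_apply, Matrix.smul_apply,
      Matrix.vecMulVec_apply, smul_eq_mul]
    have expand : ∑ k : Fin m, E i.succ k.succ * (F k.succ j.succ - a⁻¹ * (v k * v j))
        = (∑ k : Fin m, E i.succ k.succ * F k.succ j.succ)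
          - a⁻¹ * v j * ∑ k : Fin m, E i.succ k.succ * v k := by
      simp only [mul_sub]
      rw [Finset.sum_sub_distrib, Finset.mul_sum]
      congr 1
      apply Finset.sum_congr rfl
      intro k _
      ring
    rw [expand]
    have hA : ∑ k : Fin m, E i.succ k.succ * v k = -(E i.succ 0 * a) := by
      have := lemA i; linarith
    have hB : ∑ k : Fin m, E i.succ k.succ * F k.succ j.succ
        = (if i = j then 1 else 0) - E i.succ 0 * F 0 j.succ := by
      have := lemB i j; linarith
    rw [hA, hB]
    have hvj : F 0 j.succ = v j := hsym 0 j.succ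
    rw [hvj]
    have hne : a ≠ 0 := h11
    rw [Matrix.one_apply]
    field_simp
    split_ifs <;> ring
  have hXinv : (E.submatrix Fin.succ Fin.succ)⁻¹ = X := inv_eq_right_inv hright
  rw [hXinv, hX]
  have htr : (F.submatrix Fin.succ Fin.succ -
      (F.submatrix Fin.succ Fin.succ - a⁻¹ • vecMulVec v v)).trace
      = a⁻¹ * ∑ k : Fin m, v k * v k := by
    rw [sub_sub_cancel, Matrix.trace_smul]
    simp [Matrix.trace, Matrix.diag, Matrix.vecMulVec_apply, Finset.mul_sum]
  rw [htr]
  -- now the left-hand side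
  have he1dot : ∀ w : Fin (m+1) → ℝ, e1 ⬝ᵥ w = w 0 := by
    intro w; simp [he1, dotProduct]
  have hmv : (F * P2 * F) *ᵥ e1 = fun i => (F * P2 * F) i 0 := by
    ext i; simp [he1, Matrix.mulVec, dotProduct, mul_ite]
  rw [hmv, he1dot]
  have hmid : (F * P2 * F) 0 0 = ∑ k : Fin m, v k * v k := by
    have hP : F * P2 * F = F * F - F * vecMulVec e1 e1 * F := by
      rw [hP2]; noncomm_ring
    rw [hP]
    have h1 : (F * F) 0 0 = a * a + ∑ k : Fin m, v k * v k := by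
      rw [Matrix.mul_apply, Fin.sum_univ_succ]
      congr 1
      apply Finset.sum_congr rfl
      intro k _
      rw [hsym 0 k.succ]
    have h2 : (F * vecMulVec e1 e1 * F) 0 0 = a * a := by
      rw [Matrix.mul_apply]
      have hrow : ∀ l, (F * vecMulVec e1 e1) 0 l = a * e1 l := by
        intro l
        rw [Matrix.mul_apply]
        simp [he1, Matrix.vecMulVec_apply, mul_ite, Finset.sum_ite_eq']
        rfl
      simp only [hrow]
      simp [he1, ite_mul, Finset.sum_ite_eq']
      exact Or.inl rfl
    rw [Matrix.sub_apply, h1, h2]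
    ring
  rw [hmid, eq_comm, mul_comm, eq_div_iff h11, mul_assoc, inv_mul_cancel₀ h11, mul_one]
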